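/- Let f ∈ C^s(T²) with s ≥ 2 and mean value 0, and let γ(t) = (at, bt + c) be a closed geodesic with gcd(a,b) = 1, a ≠ 0, b ≠ 0, |a| ≥ |b|. Then |(1/|γ|)∫_γ f dH¹| ≤ C_s · (max_{|α|=s}‖∂_α f‖_{L¹(T²)}) / |γ|^s, where |γ| = √(a²+b²). -/

import Mathlib

open MeasureTheory

/-- A function on `ℝ²` that is `ℤ²`-periodic, i.e. a function on the torus `T²`. -/
def Periodic2 (f : ℝ × ℝ → ℂ) : Prop :=
  ∀ x y : ℝ, f (x + 1, y) = f (x, y) ∧ f (x, y + 1) = f (x, y)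

/-- The Fourier coefficient `f̂(k) = ∫_{[0,1]²} f(x,y) e^{-2πi(k₁x + k₂y)}`. -/
noncomputable def fc (f : ℝ × ℝ → ℂ) (k : ℤ × ℤ) : ℂ :=
  ∫ x in (0:ℝ)..1, ∫ y in (0:ℝ)..1,
    f (x, y) * Complex.exp (-2 * (Real.pi : ℂ) * Complex.I * ((k.1 : ℂ) * x + (k.2 : ℂ) * y))

/-- The average of `f` over the closed geodesic `γ(t) = (a t, b t + c)`, `t ∈ [0,1]`:
`(1/|γ|) ∫_γ f dH¹ = ∫₀¹ f(γ(t)) dt`. -/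
noncomputable def geodAvg (f : ℝ × ℝ → ℂ) (a b : ℤ) (c : ℝ) : ℂ :=
  ∫ t in (0:ℝ)..1, f ((a : ℝ) * t, (b : ℝ) * t + c)

/-- The average of `f` over the general closed geodesic `γ(t) = p + t (a,b)`, `t ∈ [0,1]`. -/
noncomputable def geodAvgP (f : ℝ × ℝ → ℂ) (a b : ℤ) (p : ℝ × ℝ) : ℂ :=
  ∫ t in (0:ℝ)..1, f (p.1 + (a : ℝ) * t, p.2 + (b : ℝ) * t)

/-- The squared `L²(T²)` norm of `f`. -/
noncomputable def L2sq (f : ℝ × ℝ → ℂ) : ℝ :=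
  ∫ x in (0:ℝ)..1, ∫ y in (0:ℝ)..1, ‖f (x, y)‖ ^ 2

/-- The `L¹(T²)` norm of `f`. -/
noncomputable def L1norm (f : ℝ × ℝ → ℂ) : ℝ :=
  ∫ x in (0:ℝ)..1, ∫ y in (0:ℝ)..1, ‖f (x, y)‖

/-- Partial derivative in the first variable. -/
noncomputable def pd1 (f : ℝ × ℝ → ℂ) : ℝ × ℝ → ℂ :=
  fun v => deriv (fun x => f (x, v.2)) v.1

/-- Partial derivative in the second variable. -/
noncomputable def pd2 (f : ℝ × ℝ → ℂ) : ℝ × ℝ → ℂ :=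
  fun v => deriv (fun y => f (v.1, y)) v.2

/-- The mixed partial derivative `∂_α f` for the multi-index `α = (α₁, α₂)`. -/
noncomputable def pdMix (a1 a2 : ℕ) (f : ℝ × ℝ → ℂ) : ℝ × ℝ → ℂ :=
  pd1^[a1] (pd2^[a2] f)

/-- The squared `L²(T²)` norm of `∇f`. -/
noncomputable def gradL2sq (f : ℝ × ℝ → ℂ) : ℝ :=
  ∫ x in (0:ℝ)..1, ∫ y in (0:ℝ)..1, (‖pd1 f (x, y)‖ ^ 2 + ‖pd2 f (x, y)‖ ^ 2)

section Aux

noncomputable def rpd2 (f : ℝ × ℝ → ℝ) : ℝ × ℝ → ℝ :=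
  fun v => deriv (fun y => f (v.1, y)) v.2

lemma deriv_ofReal_comp (h : ℝ → ℝ) (x : ℝ) :
    deriv (fun y => ((h y : ℂ))) x = ((deriv h x : ℝ) : ℂ) := by
  by_cases hd : DifferentiableAt ℝ h x
  · exact (hd.hasDerivAt.ofReal_comp).deriv
  · rw [deriv_zero_of_not_differentiableAt hd, deriv_zero_of_not_differentiableAt, Complex.ofReal_zero]
    intro hc
    have : DifferentiableAt ℝ (fun y => ((h y : ℂ)).re) x :=
      (Complex.reCLM.differentiableAt).comp x hc
    exact hd (by simpa using this)

lemma pd2_ofReal (f : ℝ × ℝ → ℝ) :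
    pd2 (fun v => ((f v : ℂ))) = fun v => ((rpd2 f v : ℝ) : ℂ) := by
  funext v
  exact deriv_ofReal_comp (fun y => f (v.1, y)) v.2

lemma pd2_iter_ofReal (f : ℝ × ℝ → ℝ) (n : ℕ) :
    pd2^[n] (fun v => ((f v : ℂ))) = fun v => ((rpd2^[n] f v : ℝ) : ℂ) := by
  induction n with
  | zero => rfl
  | succ n ih => rw [Function.iterate_succ_apply', Function.iterate_succ_apply', ih, pd2_ofReal]

def Per2 (f : ℝ × ℝ → ℝ) : Prop := ∀ x y : ℝ, f (x + 1, y) = f (x, y) ∧ f (x, y + 1) = f (x, y)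

lemma periodic_int_shift {h : ℝ → ℝ} (hp : Function.Periodic h 1) (n : ℤ) (x : ℝ) :
    h (x + n) = h x := by
  simpa using (hp.int_mul n) x

lemma Per2.shift {f : ℝ × ℝ → ℝ} (hf : Per2 f) (m n : ℤ) (x y : ℝ) :
    f (x + m, y + n) = f (x, y) := by
  have h1 : Function.Periodic (fun x' => f (x', y + n)) 1 := fun t => (hf t (y + n)).1
  have h2 : Function.Periodic (fun y' => f (x, y')) 1 := fun t => (hf x t).2
  rw [periodic_int_shift h1 m x]
  exact periodic_int_shift h2 n y

lemma Per2.rpd2' {f : ℝ × ℝ → ℝ} (hf : Per2 f) : Per2 (rpd2 f) := by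
  intro x y
  constructor
  · show deriv (fun t => f (x + 1, t)) y = deriv (fun t => f (x, t)) y
    congr 1
    funext t
    exact (hf x t).1
  · show deriv (fun t => f (x, t)) (y + 1) = deriv (fun t => f (x, t)) y
    have hp : Function.Periodic (fun t => f (x, t)) 1 := fun t => (hf x t).2
    have : (fun t => f (x, t)) = (fun t => f (x, t + 1)) := by
      funext t; exact (hp t).symm
    conv_rhs => rw [this]
    rw [deriv_comp_add_const (fun t => f (x, t)) 1 y]

lemma Per2.bounded {f : ℝ × ℝ → ℝ} (hf : Per2 f) (hc : Continuous f) :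
    ∃ K, 0 ≤ K ∧ ∀ v, |f v| ≤ K := by
  obtain ⟨K, hK⟩ := (isCompact_Icc.prod isCompact_Icc :
    IsCompact (Set.Icc (0:ℝ) 1 ×ˢ Set.Icc (0:ℝ) 1)).exists_bound_of_continuousOn hc.continuousOn
  have h00 : ((0:ℝ), (0:ℝ)) ∈ Set.Icc (0:ℝ) 1 ×ˢ Set.Icc (0:ℝ) 1 := by
    constructor <;> constructor <;> norm_num
  refine ⟨K, le_trans (norm_nonneg _) (hK _ h00), ?_⟩
  intro v
  have he : f v = f (Int.fract v.1, Int.fract v.2) := by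
    have := hf.shift (-⌊v.1⌋) (-⌊v.2⌋) v.1 v.2
    have e1 : v.1 + ((-⌊v.1⌋ : ℤ) : ℝ) = Int.fract v.1 := by
      rw [Int.fract]; push_cast; ring
    have e2 : v.2 + ((-⌊v.2⌋ : ℤ) : ℝ) = Int.fract v.2 := by
      rw [Int.fract]; push_cast; ring
    rw [e1, e2] at this
    rw [← this]
  rw [he, ← Real.norm_eq_abs]
  exact hK _ ⟨⟨Int.fract_nonneg _, (Int.fract_lt_one _).le⟩,
    ⟨Int.fract_nonneg _, (Int.fract_lt_one _).le⟩⟩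

lemma rpd2_eq_fderiv {f : ℝ × ℝ → ℝ} (hf : Differentiable ℝ f) :
    rpd2 f = fun v => fderiv ℝ f v (0, 1) := by
  funext v
  have h1 : HasDerivAt (fun y => ((v.1, y) : ℝ × ℝ)) ((0:ℝ), (1:ℝ)) v.2 :=
    (hasDerivAt_const v.2 v.1).prodMk (hasDerivAt_id v.2)
  have h2 := (hf (v.1, v.2)).hasFDerivAt.comp_hasDerivAt v.2 h1
  exact h2.deriv

lemma hasDerivAt_snd {f : ℝ × ℝ → ℝ} (hf : Differentiable ℝ f) (x y : ℝ) :
    HasDerivAt (fun y' => f (x, y')) (rpd2 f (x, y)) y := by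
  have h1 : HasDerivAt (fun y' => ((x, y') : ℝ × ℝ)) ((0:ℝ), (1:ℝ)) y :=
    (hasDerivAt_const y x).prodMk (hasDerivAt_id y)
  have h2 := (hf (x, y)).hasFDerivAt.comp_hasDerivAt y h1
  rw [rpd2_eq_fderiv hf]
  exact h2

lemma contDiff_rpd2 {f : ℝ × ℝ → ℝ} {n : ℕ} (hf : ContDiff ℝ (n + 1 : ℕ) f) :
    ContDiff ℝ (n : ℕ) (rpd2 f) := by
  rw [rpd2_eq_fderiv (hf.differentiable (by simp))]
  exact (hf.fderiv_right (by exact_mod_cast le_refl (n+1))).clm_apply contDiff_const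

lemma contDiff_rpd2_iter {f : ℝ × ℝ → ℝ} {s : ℕ} (hf : ContDiff ℝ (s : ℕ) f) :
    ∀ j, j ≤ s → ContDiff ℝ ((s - j : ℕ)) (rpd2^[j] f) := by
  intro j
  induction j with
  | zero => intro _; simpa using hf
  | succ j ih =>
    intro hj
    rw [Function.iterate_succ_apply']
    have h1 : ContDiff ℝ ((s - (j+1) + 1 : ℕ)) (rpd2^[j] f) := by
      have : s - (j+1) + 1 = s - j := by omega
      rw [this]; exact ih (by omega)
    exact contDiff_rpd2 h1

lemma geod_periodic_one {h : ℝ × ℝ → ℝ} (hph : Per2 h) (a b : ℤ) :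
    Function.Periodic (fun c => ∫ t in (0:ℝ)..1, h ((a:ℝ)*t, (b:ℝ)*t + c)) 1 := by
  intro c
  refine intervalIntegral.integral_congr fun t _ => ?_
  have := hph.shift 0 1 ((a:ℝ)*t) ((b:ℝ)*t + c)
  convert this using 2 <;> push_cast <;> ring

lemma geod_periodic {h : ℝ × ℝ → ℝ} (hph : Per2 h)
    {a b : ℤ} (hgcd : Int.gcd a b = 1) (ha : a ≠ 0) :
    Function.Periodic (fun c => ∫ t in (0:ℝ)..1, h ((a:ℝ)*t, (b:ℝ)*t + c)) (1/(a:ℝ)) := by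
  set G := fun c => ∫ t in (0:ℝ)..1, h ((a:ℝ)*t, (b:ℝ)*t + c) with hGdef
  have haR : (a:ℝ) ≠ 0 := Int.cast_ne_zero.mpr ha
  have hone : Function.Periodic G 1 := geod_periodic_one hph a b
  have hk : ∀ (k : ℤ) (c : ℝ), G (c + (b:ℝ)*(k:ℝ)/(a:ℝ)) = G c := by
    intro k c
    have hper_t : Function.Periodic (fun t => h ((a:ℝ)*t, (b:ℝ)*t + c)) 1 := by
      intro t
      have := hph.shift a b ((a:ℝ)*t) ((b:ℝ)*t + c)
      convert this using 2 <;> push_cast <;> ring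
    have e1 : G c = ∫ t in ((k:ℝ)/(a:ℝ))..((k:ℝ)/(a:ℝ) + 1), h ((a:ℝ)*t, (b:ℝ)*t + c) := by
      have := hper_t.intervalIntegral_add_eq 0 ((k:ℝ)/(a:ℝ))
      simpa [hGdef] using this
    have e2 : ∫ t in ((k:ℝ)/(a:ℝ))..((k:ℝ)/(a:ℝ) + 1), h ((a:ℝ)*t, (b:ℝ)*t + c)
        = ∫ t in (0:ℝ)..1, h ((a:ℝ)*(t + (k:ℝ)/(a:ℝ)), (b:ℝ)*(t + (k:ℝ)/(a:ℝ)) + c) := by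
      rw [intervalIntegral.integral_comp_add_right
        (fun t => h ((a:ℝ)*t, (b:ℝ)*t + c)) ((k:ℝ)/(a:ℝ))]
      norm_num [add_comm]
    have e3 : ∫ t in (0:ℝ)..1, h ((a:ℝ)*(t + (k:ℝ)/(a:ℝ)), (b:ℝ)*(t + (k:ℝ)/(a:ℝ)) + c)
        = G (c + (b:ℝ)*(k:ℝ)/(a:ℝ)) := by
      refine intervalIntegral.integral_congr fun t _ => ?_
      have harg : ((a:ℝ)*(t + (k:ℝ)/(a:ℝ)), (b:ℝ)*(t + (k:ℝ)/(a:ℝ)) + c)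
          = ((a:ℝ)*t + (k:ℤ), ((b:ℝ)*t + (c + (b:ℝ)*(k:ℝ)/(a:ℝ))) + ((0:ℤ):ℝ)) := by
        rw [Prod.mk.injEq]
        constructor <;> push_cast <;> field_simp <;> ring
      rw [harg, hph.shift k 0]
    rw [e1, e2, e3]
  obtain ⟨u, v, huv⟩ := Int.isCoprime_iff_gcd_eq_one.mpr hgcd
  intro c
  have hr : (u:ℝ)*(a:ℝ) + (v:ℝ)*(b:ℝ) = 1 := by exact_mod_cast congrArg (Int.cast : ℤ → ℝ) huv
  have e : c + 1/(a:ℝ) = (c + (u:ℝ)) + (b:ℝ)*(v:ℝ)/(a:ℝ) := by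
    field_simp
    linarith [hr]
  show G (c + 1/(a:ℝ)) = G c
  rw [e, hk v (c + (u:ℝ))]
  exact periodic_int_shift hone u c

lemma cont_geod {h : ℝ × ℝ → ℝ} (hch : Continuous h) (a b : ℤ) :
    Continuous (fun c => ∫ t in (0:ℝ)..1, h ((a:ℝ)*t, (b:ℝ)*t + c)) := by
  apply intervalIntegral.continuous_parametric_intervalIntegral_of_continuous'
    (f := fun (c : ℝ) (t : ℝ) => h ((a:ℝ)*t, (b:ℝ)*t + c)) ?_ 0 1
  fun_prop

lemma hasDerivAt_geod {h : ℝ × ℝ → ℝ} (hd : Differentiable ℝ h)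
    (hb : ∃ K, ∀ v, |rpd2 h v| ≤ K) (hch : Continuous h) (hc2 : Continuous (rpd2 h))
    (a b : ℤ) (c : ℝ) :
    HasDerivAt (fun c => ∫ t in (0:ℝ)..1, h ((a:ℝ)*t, (b:ℝ)*t + c))
      (∫ t in (0:ℝ)..1, rpd2 h ((a:ℝ)*t, (b:ℝ)*t + c)) c := by
  obtain ⟨K, hK⟩ := hb
  have main := intervalIntegral.hasDerivAt_integral_of_dominated_loc_of_deriv_le
    (F := fun (x : ℝ) (t : ℝ) => h ((a:ℝ)*t, (b:ℝ)*t + x))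
    (F' := fun (x : ℝ) (t : ℝ) => rpd2 h ((a:ℝ)*t, (b:ℝ)*t + x))
    (x₀ := c) (s := Metric.ball c 1) (bound := fun _ => K) (a := 0) (b := 1) (μ := volume)
    (Metric.ball_mem_nhds c one_pos) ?_ ?_ ?_ ?_ ?_ ?_
  · exact main.2
  · filter_upwards with x
    exact ((hch.comp (by fun_prop : Continuous fun t : ℝ =>
      (((a:ℝ)*t, (b:ℝ)*t + x) : ℝ × ℝ)))).aestronglyMeasurable
  · exact ((hch.comp (by fun_prop : Continuous fun t : ℝ =>
      (((a:ℝ)*t, (b:ℝ)*t + c) : ℝ × ℝ)))).intervalIntegrable 0 1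
  · exact ((hc2.comp (by fun_prop : Continuous fun t : ℝ =>
      (((a:ℝ)*t, (b:ℝ)*t + c) : ℝ × ℝ)))).aestronglyMeasurable
  · filter_upwards with t _ x _
    simpa [Real.norm_eq_abs] using hK ((a:ℝ)*t, (b:ℝ)*t + x)
  · exact intervalIntegrable_const
  · filter_upwards with t _ x _
    have h1 : HasDerivAt (fun y' => h ((a:ℝ)*t, y')) (rpd2 h ((a:ℝ)*t, (b:ℝ)*t + x))
        ((b:ℝ)*t + x) := hasDerivAt_snd hd _ _
    have h2 : HasDerivAt (fun x' : ℝ => (b:ℝ)*t + x') 1 x := (hasDerivAt_id x).const_add _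
    simpa [Function.comp_def] using h1.comp x h2

lemma sup_le_integral_abs_deriv {g g' : ℝ → ℝ} {L : ℝ} (hL : 0 < L)
    (hper : Function.Periodic g L) (hper' : Function.Periodic g' L)
    (hd : ∀ x, HasDerivAt g (g' x) x) (hc' : Continuous g')
    (hmean : ∫ x in (0:ℝ)..L, g x = 0) (c : ℝ) :
    |g c| ≤ ∫ x in (0:ℝ)..L, |g' x| := by
  have hgc : Continuous g := by
    rw [continuous_iff_continuousAt]; exact fun x => (hd x).continuousAt
  -- there is a zero of g in [0, L]
  have hzero : ∃ c₀ ∈ Set.Icc (0:ℝ) L, g c₀ = 0 := by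
    by_contra hno
    push_neg at hno
    have hiv : ∀ x ∈ Set.Icc (0:ℝ) L, ∀ y ∈ Set.Icc (0:ℝ) L, g x < 0 → 0 < g y → False := by
      intro x hx y hy hgx hgy
      rcases le_total x y with hxy | hxy
      · obtain ⟨z, hz, hz0⟩ := intermediate_value_Icc hxy (hgc.continuousOn)
          (⟨hgx.le, hgy.le⟩ : (0:ℝ) ∈ Set.Icc (g x) (g y))
        exact hno z ⟨le_trans hx.1 hz.1, le_trans hz.2 hy.2⟩ hz0
      · obtain ⟨z, hz, hz0⟩ := intermediate_value_Icc' hxy (hgc.continuousOn)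
          (⟨hgx.le, hgy.le⟩ : (0:ℝ) ∈ Set.Icc (g x) (g y))
        exact hno z ⟨le_trans hy.1 hz.1, le_trans hz.2 hx.2⟩ hz0
    rcases lt_or_gt_of_ne (hno 0 ⟨le_refl 0, hL.le⟩) with h0 | h0
    · have hallneg : ∀ x ∈ Set.Icc (0:ℝ) L, g x < 0 := by
        intro x hx
        rcases lt_or_gt_of_ne (hno x hx) with h | h
        · exact h
        · exact absurd (hiv 0 ⟨le_refl 0, hL.le⟩ x hx h0 h) (fun h => h)
      have : (0:ℝ) < ∫ x in (0:ℝ)..L, -g x := by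
        apply intervalIntegral.intervalIntegral_pos_of_pos_on
          ((hgc.neg : Continuous fun x => -g x).intervalIntegrable 0 L)
          (fun x hx => neg_pos.mpr (hallneg x ⟨hx.1.le, hx.2.le⟩)) hL
      rw [intervalIntegral.integral_neg, hmean, neg_zero] at this
      exact lt_irrefl 0 this
    · have hallpos : ∀ x ∈ Set.Icc (0:ℝ) L, 0 < g x := by
        intro x hx
        rcases lt_or_gt_of_ne (hno x hx) with h | h
        · exact absurd (hiv x hx 0 ⟨le_refl 0, hL.le⟩ h h0) (fun h => h)
        · exact h
      have : (0:ℝ) < ∫ x in (0:ℝ)..L, g x := by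
        apply intervalIntegral.intervalIntegral_pos_of_pos_on
          (hgc.intervalIntegrable 0 L)
          (fun x hx => hallpos x ⟨hx.1.le, hx.2.le⟩) hL
      rw [hmean] at this
      exact lt_irrefl 0 this
  obtain ⟨c₀, hc₀mem, hc₀⟩ := hzero
  -- reduce c into [c₀, c₀ + L)
  set n : ℤ := ⌊(c - c₀)/L⌋ with hn
  set c' : ℝ := c - n * L with hc'def
  have hge : c₀ ≤ c' := by
    have h1 : (n:ℝ) ≤ (c - c₀)/L := Int.floor_le _
    have := (mul_le_mul_of_nonneg_right h1 hL.le)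
    rw [div_mul_cancel₀ _ hL.ne'] at this
    simp only [hc'def]
    linarith
  have hle : c' ≤ c₀ + L := by
    have h1 : (c - c₀)/L < n + 1 := Int.lt_floor_add_one _
    have := (mul_lt_mul_of_pos_right h1 hL)
    rw [div_mul_cancel₀ _ hL.ne'] at this
    simp only [hc'def]
    nlinarith
  have hgcc' : g c = g c' := by
    rw [hc'def]
    exact (hper.sub_int_mul_eq n).symm ▸ rfl
  have hftc : g c' - g c₀ = ∫ x in c₀..c', g' x :=
    (intervalIntegral.integral_eq_sub_of_hasDerivAt (fun x _ => hd x)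
      (hc'.intervalIntegrable _ _)).symm
  have habs : Function.Periodic (fun x => |g' x|) L := fun x => by simp [hper' x]
  calc |g c| = |g c' - g c₀| := by rw [hgcc', hc₀, sub_zero]
    _ = |∫ x in c₀..c', g' x| := by rw [hftc]
    _ ≤ ∫ x in c₀..c', |g' x| := intervalIntegral.abs_integral_le_integral_abs hge
    _ ≤ ∫ x in c₀..(c₀ + L), |g' x| := by
        apply intervalIntegral.integral_mono_interval (le_refl c₀) hge hle
        · filter_upwards with x using abs_nonneg _
        · exact (hc'.abs.intervalIntegrable _ _)
    _ = ∫ x in (0:ℝ)..(0 + L), |g' x| := habs.intervalIntegral_add_eq c₀ 0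
    _ = ∫ x in (0:ℝ)..L, |g' x| := by rw [zero_add]

lemma swap01 {h : ℝ → ℝ → ℝ} (hc : Continuous (Function.uncurry h)) :
    ∫ x in (0:ℝ)..1, ∫ y in (0:ℝ)..1, h x y = ∫ y in (0:ℝ)..1, ∫ x in (0:ℝ)..1, h x y := by
  obtain ⟨K, hK⟩ := (isCompact_Icc.prod isCompact_Icc :
    IsCompact (Set.Icc (0:ℝ) 1 ×ˢ Set.Icc (0:ℝ) 1)).exists_bound_of_continuousOn hc.continuousOn
  set ν : Measure ℝ := volume.restrict (Set.Ioc (0:ℝ) 1) with hν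
  haveI : IsFiniteMeasure ν := ⟨by simp [hν]⟩
  have e1 : ∀ (F : ℝ → ℝ), (∫ z in (0:ℝ)..1, F z) = ∫ z, F z ∂ν := fun F =>
    intervalIntegral.integral_of_le zero_le_one
  have hint : Integrable (Function.uncurry h) (ν.prod ν) := by
    refine ⟨hc.aestronglyMeasurable, ?_⟩
    apply HasFiniteIntegral.of_bounded (C := K)
    rw [hν, Measure.prod_restrict]
    apply ae_restrict_of_forall_mem (measurableSet_Ioc.prod measurableSet_Ioc)
    intro p hp
    exact hK p ⟨Set.Ioc_subset_Icc_self hp.1, Set.Ioc_subset_Icc_self hp.2⟩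
  rw [e1, e1]
  simp only [e1]
  exact integral_integral_swap hint

lemma inner_translate {h : ℝ × ℝ → ℝ} (hph : Per2 h) (x d : ℝ) :
    ∫ c in (0:ℝ)..1, h (x, d + c) = ∫ c in (0:ℝ)..1, h (x, c) := by
  have e0 : ∫ c in (0:ℝ)..1, h (x, d + c) = ∫ c in (0:ℝ)..1, h (x, c + d) := by
    refine intervalIntegral.integral_congr fun t _ => by rw [add_comm]
  rw [e0, intervalIntegral.integral_comp_add_right (fun c => h (x, c)) d]
  have hp : Function.Periodic (fun c => h (x, c)) 1 := fun t => (hph x t).2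
  have := hp.intervalIntegral_add_eq d 0
  simpa [add_comm] using this

lemma integral_comp_int_mul {H : ℝ → ℝ} (hH : Continuous H) (hp : Function.Periodic H 1)
    {a : ℤ} (ha : a ≠ 0) :
    ∫ t in (0:ℝ)..1, H ((a:ℝ) * t) = ∫ t in (0:ℝ)..1, H t := by
  have haR : (a:ℝ) ≠ 0 := Int.cast_ne_zero.mpr ha
  have h1 : ∫ t in (0:ℝ)..1, H ((a:ℝ)*t) = (a:ℝ)⁻¹ • ∫ x in ((a:ℝ)*0)..((a:ℝ)*1), H x :=
    intervalIntegral.integral_comp_mul_left H haR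
  have h2 := hp.intervalIntegral_add_zsmul_eq a 0 (fun t₁ t₂ => hH.intervalIntegrable t₁ t₂)
  simp only [zero_add, zsmul_eq_mul, smul_eq_mul] at h1 h2
  rw [h1, mul_zero, h2]
  field_simp

lemma integral_over_small_period {G : ℝ → ℝ} (hG : Continuous G) {a : ℤ} (ha : a ≠ 0)
    (hp : Function.Periodic G (1/(a:ℝ))) :
    ∫ x in (0:ℝ)..(1/|(a:ℝ)|), G x = (1/|(a:ℝ)|) * ∫ x in (0:ℝ)..1, G x := by
  have haR : (a:ℝ) ≠ 0 := Int.cast_ne_zero.mpr ha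
  have key : ∫ x in (0:ℝ)..1, G x = (a:ℝ) * ∫ x in (0:ℝ)..(1/(a:ℝ)), G x := by
    have h2 := hp.intervalIntegral_add_zsmul_eq a 0 (fun t₁ t₂ => hG.intervalIntegrable t₁ t₂)
    simp only [zero_add, zsmul_eq_mul, smul_eq_mul] at h2
    rw [mul_one_div, div_self haR] at h2
    exact h2
  rcases lt_or_gt_of_ne (fun h => ha (by exact_mod_cast h) : (a:ℝ) ≠ 0) with hneg | hpos
  · have habs : |(a:ℝ)| = -(a:ℝ) := abs_of_neg hneg
    have habs' : 1/|(a:ℝ)| = -(1/(a:ℝ)) := by rw [habs]; ring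
    have h3 := (hp.neg).intervalIntegral_add_eq 0 (1/(a:ℝ))
    simp only [zero_add] at h3
    have e : 1/(a:ℝ) + -(1/(a:ℝ)) = 0 := by ring
    rw [e] at h3
    have h4 : ∫ x in (1/(a:ℝ))..(0:ℝ), G x = - ∫ x in (0:ℝ)..(1/(a:ℝ)), G x :=
      intervalIntegral.integral_symm 0 (1/(a:ℝ))
    rw [habs', h3, h4, key]
    field_simp
  · have habs : |(a:ℝ)| = (a:ℝ) := abs_of_pos hpos
    rw [habs, key]
    field_simp

lemma double_avg {h : ℝ × ℝ → ℝ} (hph : Per2 h) (hch : Continuous h) (a b : ℤ) (ha : a ≠ 0) :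
    ∫ c in (0:ℝ)..1, ∫ t in (0:ℝ)..1, h ((a:ℝ)*t, (b:ℝ)*t + c)
      = ∫ x in (0:ℝ)..1, ∫ y in (0:ℝ)..1, h (x, y) := by
  have hu : Continuous (Function.uncurry (fun c t => h ((a:ℝ)*t, (b:ℝ)*t + c))) := by
    have : Continuous fun p : ℝ × ℝ => h ((a:ℝ)*p.2, (b:ℝ)*p.2 + p.1) :=
      hch.comp (by fun_prop)
    exact this
  rw [swap01 hu]
  have e1 : Set.EqOn (fun t => ∫ c in (0:ℝ)..1, h ((a:ℝ)*t, (b:ℝ)*t + c))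
      (fun t => (fun x => ∫ c in (0:ℝ)..1, h (x, c)) ((a:ℝ)*t)) (Set.uIcc (0:ℝ) 1) :=
    fun t _ => inner_translate hph _ _
  rw [intervalIntegral.integral_congr e1]
  have Hcont : Continuous (fun x => ∫ c in (0:ℝ)..1, h (x, c)) := by
    apply intervalIntegral.continuous_parametric_intervalIntegral_of_continuous'
      (f := fun x c => h (x, c)) ?_ 0 1
    fun_prop
  have Hper : Function.Periodic (fun x => ∫ c in (0:ℝ)..1, h (x, c)) 1 := by
    intro x
    exact intervalIntegral.integral_congr fun c _ => (hph x c).1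
  exact integral_comp_int_mul Hcont Hper ha

end Aux

/-- for real `f ∈ C^s(T²)`, `s ≥ 2`, with mean value zero, and a closed geodesic
`γ(t) = (at, bt+c)` with `gcd(a,b)=1`, `a ≠ 0 ≠ b`, `|a| ≥ |b|`, the average of `f` over `γ`
is at most `C_s (max_{|α|=s} ‖∂_α f‖_{L¹}) / |γ|^s` where `|γ| = √(a²+b²)`. -/

theorem stmt9 (s : ℕ) (hs : 2 ≤ s) :
    ∃ C : ℝ, 0 < C ∧
      ∀ (f : ℝ × ℝ → ℝ), Periodic2 (fun v => (f v : ℂ)) →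
        ContDiff ℝ s f →
        (∫ x in (0:ℝ)..1, ∫ y in (0:ℝ)..1, f (x, y)) = 0 →
        ∀ M : ℝ,
          (∀ a1 a2 : ℕ, a1 + a2 = s → L1norm (pdMix a1 a2 (fun v => (f v : ℂ))) ≤ M) →
          ∀ a b : ℤ, Int.gcd a b = 1 → a ≠ 0 → b ≠ 0 → |b| ≤ |a| →
            ∀ c : ℝ,
              ‖geodAvg (fun v => (f v : ℂ)) a b c‖ ≤
                C * M / Real.sqrt ((a : ℝ) ^ 2 + (b : ℝ) ^ 2) ^ s := by
  refine ⟨(Real.sqrt 2) ^ s, pow_pos (Real.sqrt_pos.mpr two_pos) s, ?_⟩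
  intro f hper hcd hmean M hM a b hgcd ha hb hba c
  have hperR : Per2 f := by
    intro x y
    constructor
    · exact Complex.ofReal_inj.mp (hper x y).1
    · exact Complex.ofReal_inj.mp (hper x y).2
  have haR : (a:ℝ) ≠ 0 := Int.cast_ne_zero.mpr ha
  have habs0 : (0:ℝ) < |(a:ℝ)| := abs_pos.mpr haR
  set L : ℝ := 1/|(a:ℝ)| with hLdef
  have hL0 : 0 < L := by positivity
  set F : ℕ → ℝ × ℝ → ℝ := fun j => rpd2^[j] f with hFdef
  have hFsm : ∀ j, j ≤ s → ContDiff ℝ ((s - j : ℕ)) (F j) := contDiff_rpd2_iter hcd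
  have hFc : ∀ j, j ≤ s → Continuous (F j) := fun j hj => (hFsm j hj).continuous
  have hFd : ∀ j, j < s → Differentiable ℝ (F j) := by
    intro j hj
    apply (hFsm j hj.le).differentiable
    have h1 : (1:ℕ) ≤ s - j := by omega
    exact_mod_cast (show s - j ≠ 0 by omega)
  have hFper : ∀ j, Per2 (F j) := by
    intro j
    induction j with
    | zero => simpa [hFdef] using hperR
    | succ j ih =>
      have hsucc : F (j+1) = rpd2 (F j) := Function.iterate_succ_apply' _ _ _
      rw [hsucc]
      exact ih.rpd2'
  set g : ℕ → ℝ → ℝ := fun j c => ∫ t in (0:ℝ)..1, F j ((a:ℝ)*t, (b:ℝ)*t + c) with hgdef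
  have hgc : ∀ j, j ≤ s → Continuous (g j) := fun j hj => cont_geod (hFc j hj) a b
  have hgper : ∀ j, Function.Periodic (g j) (1/(a:ℝ)) := fun j =>
    geod_periodic (hFper j) hgcd ha
  have hgperL : ∀ j, Function.Periodic (g j) L := by
    intro j
    rcases abs_choice (a:ℝ) with h | h
    · rw [hLdef, h]
      exact hgper j
    · rw [hLdef, h]
      have := (hgper j).neg
      simpa [neg_div, one_div, inv_neg] using this
  have hgd : ∀ j, j < s → ∀ x, HasDerivAt (g j) (g (j+1) x) x := by
    intro j hj x
    have hsucc : F (j+1) = rpd2 (F j) := Function.iterate_succ_apply' _ _ _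
    have hbdd : ∃ K, ∀ v, |rpd2 (F j) v| ≤ K := by
      obtain ⟨K, _, hK⟩ := ((hFper (j+1)).bounded (hFc (j+1) hj))
      exact ⟨K, fun v => by rw [← hsucc]; exact hK v⟩
    have hc2 : Continuous (rpd2 (F j)) := by rw [← hsucc]; exact hFc (j+1) hj
    have := hasDerivAt_geod (hFd j hj) hbdd (hFc j hj.le) hc2 a b x
    simpa [hgdef, hsucc] using this
  have hmean01 : ∫ x in (0:ℝ)..1, g 0 x = 0 := by
    have hd := double_avg hperR hcd.continuous a b ha
    rw [hmean] at hd
    simpa [hgdef, hFdef] using hd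
  have hmeanL0 : ∫ x in (0:ℝ)..L, g 0 x = 0 := by
    rw [hLdef, integral_over_small_period (hgc 0 (by omega)) ha (hgper 0), hmean01, mul_zero]
  have hmeanLj : ∀ j, j + 1 ≤ s → ∫ x in (0:ℝ)..L, g (j+1) x = 0 := by
    intro j hj
    have hftc := intervalIntegral.integral_eq_sub_of_hasDerivAt
      (f := g j) (f' := g (j+1)) (a := 0) (b := L) (fun x _ => hgd j (by omega) x)
      ((hgc (j+1) hj).intervalIntegrable 0 L)
    rw [hftc]
    have hLper : g j L = g j 0 := by
      have := hgperL j 0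
      simpa using this
    rw [hLper, sub_self]
  have chain : ∀ j, j + 1 ≤ s → ∀ x, |g 0 x| ≤ L^j * ∫ t in (0:ℝ)..L, |g (j+1) t| := by
    intro j
    induction j with
    | zero =>
      intro hj x
      simpa using sup_le_integral_abs_deriv hL0 (hgperL 0) (hgperL 1)
        (hgd 0 (by omega)) (hgc 1 hj) hmeanL0 x
    | succ j ih =>
      intro hj x
      have h1 := ih (by omega) x
      have hBound : ∀ t, |g (j+1) t| ≤ ∫ u in (0:ℝ)..L, |g (j+2) u| := fun t =>
        sup_le_integral_abs_deriv hL0 (hgperL (j+1)) (hgperL (j+2))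
          (hgd (j+1) (by omega)) (hgc (j+2) hj) (hmeanLj j (by omega)) t
      have h2 : ∫ t in (0:ℝ)..L, |g (j+1) t| ≤ L * ∫ u in (0:ℝ)..L, |g (j+2) u| := by
        have hmono := intervalIntegral.integral_mono_on (μ := volume) (a := 0) (b := L)
          (f := fun t => |g (j+1) t|) (g := fun _ => ∫ u in (0:ℝ)..L, |g (j+2) u|)
          hL0.le (((hgc (j+1) (by omega)).abs).intervalIntegrable 0 L)
          intervalIntegrable_const (fun t _ => hBound t)
        rw [intervalIntegral.integral_const] at hmono
        simpa [smul_eq_mul] using hmono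
      calc |g 0 x| ≤ L^j * ∫ t in (0:ℝ)..L, |g (j+1) t| := h1
        _ ≤ L^j * (L * ∫ u in (0:ℝ)..L, |g (j+2) u|) :=
            mul_le_mul_of_nonneg_left h2 (pow_nonneg hL0.le j)
        _ = L^(j+1) * ∫ u in (0:ℝ)..L, |g (j+2) u| := by ring
  have hs1 : s - 1 + 1 = s := by omega
  have hchain := chain (s - 1) (by omega) c
  rw [hs1] at hchain
  set G : ℝ → ℝ := fun x => ∫ u in (0:ℝ)..1, |F s ((a:ℝ)*u, (b:ℝ)*u + x)| with hGdef
  have hFabs : Per2 (fun v => |F s v|) := by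
    intro x y
    constructor
    · simp only []
      rw [(hFper s x y).1]
    · simp only []
      rw [(hFper s x y).2]
  have hGc : Continuous G := cont_geod ((hFc s le_rfl).abs) a b
  have hGper : Function.Periodic G (1/(a:ℝ)) := geod_periodic hFabs hgcd ha
  have hpoint : ∀ x, |g s x| ≤ G x := by
    intro x
    have := intervalIntegral.abs_integral_le_integral_abs (μ := volume)
      (f := fun t => F s ((a:ℝ)*t, (b:ℝ)*t + x)) (a := 0) (b := 1) zero_le_one
    simpa [hgdef, hGdef] using this
  have hGL : ∫ x in (0:ℝ)..L, G x = L * ∫ x in (0:ℝ)..1, G x := by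
    rw [hLdef]
    exact integral_over_small_period hGc ha hGper
  have hG1 : ∫ x in (0:ℝ)..1, G x = ∫ x in (0:ℝ)..1, ∫ y in (0:ℝ)..1, |F s (x, y)| :=
    double_avg hFabs ((hFc s le_rfl).abs) a b ha
  have hL1 : L1norm (pdMix 0 s (fun v => (f v : ℂ)))
      = ∫ x in (0:ℝ)..1, ∫ y in (0:ℝ)..1, |F s (x, y)| := by
    rw [L1norm, pdMix]
    simp only [Function.iterate_zero, id_eq]
    rw [pd2_iter_ofReal]
    simp [hFdef]
  have hM' : ∫ x in (0:ℝ)..1, ∫ y in (0:ℝ)..1, |F s (x, y)| ≤ M := by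
    rw [← hL1]
    exact hM 0 s (by omega)
  have hMnn : 0 ≤ ∫ x in (0:ℝ)..1, ∫ y in (0:ℝ)..1, |F s (x,y)| := by
    apply intervalIntegral.integral_nonneg zero_le_one
    intro x _
    apply intervalIntegral.integral_nonneg zero_le_one
    intro y _
    exact abs_nonneg _
  have hMnonneg : (0:ℝ) ≤ M := le_trans hMnn hM'
  have hInt1 : ∫ x in (0:ℝ)..L, |g s x| ≤ ∫ x in (0:ℝ)..L, G x :=
    intervalIntegral.integral_mono_on hL0.le
      (((hgc s le_rfl).abs).intervalIntegrable 0 L) (hGc.intervalIntegrable 0 L)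
      (fun x _ => hpoint x)
  have hgeod : ‖geodAvg (fun v => (f v : ℂ)) a b c‖ = |g 0 c| := by
    rw [geodAvg, intervalIntegral.integral_ofReal]
    simp [hgdef, hFdef]
  rw [hgeod]
  have key : |g 0 c| ≤ L^s * M := by
    calc |g 0 c| ≤ L^(s-1) * ∫ x in (0:ℝ)..L, |g s x| := hchain
      _ ≤ L^(s-1) * (L * ∫ x in (0:ℝ)..1, G x) := by
          refine mul_le_mul_of_nonneg_left ?_ (pow_nonneg hL0.le _)
          rw [← hGL]
          exact hInt1
      _ = L^(s-1+1) * ∫ x in (0:ℝ)..1, G x := by ring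
      _ = L^s * ∫ x in (0:ℝ)..1, G x := by rw [hs1]
      _ ≤ L^s * M := by
          refine mul_le_mul_of_nonneg_left ?_ (pow_nonneg hL0.le _)
          rw [hG1]
          exact hM'
  refine le_trans key ?_
  have hbleR : |(b:ℝ)| ≤ |(a:ℝ)| := by exact_mod_cast hba
  have hR : Real.sqrt ((a:ℝ)^2 + (b:ℝ)^2) ≤ Real.sqrt 2 * |(a:ℝ)| := by
    have h2 : Real.sqrt 2 * |(a:ℝ)| = Real.sqrt (2 * |(a:ℝ)|^2) := by
      rw [Real.sqrt_mul (by norm_num), Real.sqrt_sq (abs_nonneg _)]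
    rw [h2]
    apply Real.sqrt_le_sqrt
    have hb2 : (b:ℝ)^2 ≤ (a:ℝ)^2 := by
      nlinarith [abs_nonneg (a:ℝ), abs_nonneg (b:ℝ), sq_abs (a:ℝ), sq_abs (b:ℝ)]
    nlinarith [sq_abs (a:ℝ)]
  have hRpos : 0 < Real.sqrt ((a:ℝ)^2 + (b:ℝ)^2) := by
    apply Real.sqrt_pos.mpr
    have : 0 < (a:ℝ)^2 := by positivity
    nlinarith [sq_nonneg (b:ℝ)]
  rw [le_div_iff₀ (pow_pos hRpos s)]
  have e2 : L^s * |(a:ℝ)|^s = 1 := by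
    rw [hLdef, div_pow, one_pow, div_mul_cancel₀]
    positivity
  calc L^s * M * (Real.sqrt ((a:ℝ)^2+(b:ℝ)^2))^s
      ≤ L^s * M * (Real.sqrt 2 * |(a:ℝ)|)^s := by
        refine mul_le_mul_of_nonneg_left (pow_le_pow_left₀ hRpos.le hR s)
          (mul_nonneg (pow_nonneg hL0.le s) hMnonneg)
    _ = (Real.sqrt 2)^s * M * (L^s * |(a:ℝ)|^s) := by rw [mul_pow]; ring
    _ = (Real.sqrt 2)^s * M := by rw [e2, mul_one]
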